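/- Let g be a Lie algebra with basis e₁,...,eₙ, D an almost inner derivation determined by φ_D, and suppose indices i,j,k,l and nonzero scalars α, β satisfy: [e_j,e_i] - α e_l ∈ g_l, [e_k,e_i] - β e_l ∈ g_l, [e_j, g_i] ⊆ g_l and [e_k, g_i] ⊆ g_l, where g_i (resp. g_l) is the span of basis vectors other than e_i (resp. e_l). Then t_i(φ_D(e_j)) = t_i(φ_D(e_k)). -/

import Mathlib

lemma stmt14_repr_zero {K L : Type*} [Field K] [AddCommGroup L] [Module K L]
    {n : ℕ} (e : Module.Basis (Fin n) K L) (l : Fin n) {x : L}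
    (hx : x ∈ Submodule.span K (e '' {p | p ≠ l})) : e.repr x l = 0 := by
  induction hx using Submodule.span_induction with
  | mem y hy =>
    obtain ⟨p, hp, rfl⟩ := hy
    simp only [Module.Basis.repr_self, Finsupp.single_apply]
    simp only [Set.mem_setOf_eq] at hp
    simp [hp]
  | zero => simp
  | add x y _ _ hx hy => simp [hx, hy]
  | smul c x _ hx => simp [hx]

lemma stmt14_mem_span {K L : Type*} [Field K] [AddCommGroup L] [Module K L]
    {n : ℕ} (e : Module.Basis (Fin n) K L) (i : Fin n) {x : L}
    (hx : e.repr x i = 0) : x ∈ Submodule.span K (e '' {p | p ≠ i}) := by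
  rw [← e.sum_repr x]
  apply Submodule.sum_mem
  intro p _
  by_cases hp : p = i
  · subst hp; rw [hx]; simp
  · exact Submodule.smul_mem _ _ (Submodule.subset_span ⟨p, hp, rfl⟩)

/-- Lemma 3.8: with nonzero scalars `α, β` such that
`[e_j,e_i] - α e_l ∈ g_l`, `[e_k,e_i] - β e_l ∈ g_l`,
`[e_j, g_i] ⊆ g_l` and `[e_k, g_i] ⊆ g_l`, any almost inner derivation `D`
determined by `φ` satisfies `t_i(φ(e_j)) = t_i(φ(e_k))`. -/
theorem stmt14 {K L : Type*} [Field K] [LieRing L] [LieAlgebra K L]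
    {n : ℕ} (e : Module.Basis (Fin n) K L)
    (D : LieDerivation K L L) (φ : L → L)
    (hφ : ∀ x : L, D x = ⁅x, φ x⁆)
    (i j k l : Fin n) (α β : K) (hα : α ≠ 0) (hβ : β ≠ 0)
    (gl : Submodule K L) (hgl : gl = Submodule.span K (e '' {p | p ≠ l}))
    (gi : Submodule K L) (hgi : gi = Submodule.span K (e '' {p | p ≠ i}))
    (h1 : ⁅e j, e i⁆ - α • e l ∈ gl)
    (h2 : ⁅e k, e i⁆ - β • e l ∈ gl)
    (h3 : ∀ v ∈ gi, ⁅e j, v⁆ ∈ gl)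
    (h4 : ∀ v ∈ gi, ⁅e k, v⁆ ∈ gl) :
    e.repr (φ (e j)) i = e.repr (φ (e k)) i := by
  subst hgl; subst hgi
  set gl := Submodule.span K (e '' {p | p ≠ l}) with hgl
  set gi := Submodule.span K (e '' {p | p ≠ i}) with hgi
  set a := e.repr (φ (e j)) i with ha
  set b := e.repr (φ (e k)) i with hb
  have hl1 : e.repr (⁅e j, e i⁆) l = α := by
    have h := stmt14_repr_zero e l h1
    rw [map_sub, map_smul, Finsupp.sub_apply, Finsupp.smul_apply,
      Module.Basis.repr_self, Finsupp.single_eq_same, smul_eq_mul, mul_one,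
      sub_eq_zero] at h
    exact h
  have hl2 : e.repr (⁅e k, e i⁆) l = β := by
    have h := stmt14_repr_zero e l h2
    rw [map_sub, map_smul, Finsupp.sub_apply, Finsupp.smul_apply,
      Module.Basis.repr_self, Finsupp.single_eq_same, smul_eq_mul, mul_one,
      sub_eq_zero] at h
    exact h
  have hrj : φ (e j) - a • e i ∈ gi := stmt14_mem_span e i (by simp [ha])
  have hrk : φ (e k) - b • e i ∈ gi := stmt14_mem_span e i (by simp [hb])
  have hDj : e.repr (D (e j)) l = α * a := by
    have hdec : (⁅e j, φ (e j)⁆ : L)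
        = a • ⁅e j, e i⁆ + ⁅e j, φ (e j) - a • e i⁆ := by
      rw [lie_sub, lie_smul]; abel
    have hz : e.repr (⁅e j, φ (e j) - a • e i⁆) l = 0 :=
      stmt14_repr_zero e l (h3 _ hrj)
    rw [hφ, hdec, map_add, map_smul, Finsupp.add_apply, Finsupp.smul_apply,
      hl1, hz, add_zero, smul_eq_mul, mul_comm]
  have hDk : e.repr (D (e k)) l = β * b := by
    have hdec : (⁅e k, φ (e k)⁆ : L)
        = b • ⁅e k, e i⁆ + ⁅e k, φ (e k) - b • e i⁆ := by
      rw [lie_sub, lie_smul]; abel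
    have hz : e.repr (⁅e k, φ (e k) - b • e i⁆) l = 0 :=
      stmt14_repr_zero e l (h4 _ hrk)
    rw [hφ, hdec, map_add, map_smul, Finsupp.add_apply, Finsupp.smul_apply,
      hl2, hz, add_zero, smul_eq_mul, mul_comm]
  have hu : e.repr (D (β • e j - α • e k)) l = 0 := by
    rw [hφ]
    set y := φ (β • e j - α • e k) with hy
    set c := e.repr y i with hc
    have hry : y - c • e i ∈ gi := stmt14_mem_span e i (by simp [hc])
    have m1 : β • ⁅e j, e i⁆ - α • ⁅e k, e i⁆ ∈ gl := by
      have h := gl.sub_mem (gl.smul_mem β h1) (gl.smul_mem α h2)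
      convert h using 1
      module
    have key : (⁅β • e j - α • e k, y⁆ : L)
        = c • (β • ⁅e j, e i⁆ - α • ⁅e k, e i⁆)
          + (β • ⁅e j, y - c • e i⁆ - α • ⁅e k, y - c • e i⁆) := by
      simp only [sub_lie, smul_lie, lie_sub, lie_smul]
      module
    rw [key]
    exact stmt14_repr_zero e l
      (gl.add_mem (gl.smul_mem c m1)
        (gl.sub_mem (gl.smul_mem β (h3 _ hry)) (gl.smul_mem α (h4 _ hry))))
  have hlin : e.repr (D (β • e j - α • e k)) l = β * (α * a) - α * (β * b) := by
    rw [map_sub, map_smul, map_smul, map_sub, map_smul, map_smul,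
      Finsupp.sub_apply, Finsupp.smul_apply, Finsupp.smul_apply,
      hDj, hDk, smul_eq_mul, smul_eq_mul]
  rw [hlin, sub_eq_zero] at hu
  have hab : (α * β) * a = (α * β) * b := by
    calc (α * β) * a = β * (α * a) := by ring
    _ = α * (β * b) := hu
    _ = (α * β) * b := by ring
  exact mul_left_cancel₀ (mul_ne_zero hα hβ) hab
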